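/- Let H be a real vector space with a symmetric bilinear form B, and suppose β ∈ H satisfies B(β,β) > 0. Suppose a symmetric 2n-multilinear form T satisfies c·T(γ,…,γ) = B(γ,γ)^n for all γ, with c > 0. If α ∈ H satisfies T(β^{2n−1}, α) > 0 then B(α,β) > 0. -/

import Mathlib

/-- abstract Corollary `cornull`: if `c·T(γ,…,γ) = B(γ,γ)^n` with `c > 0`,
`B` symmetric bilinear, `B(β,β) > 0` and `T(β^{2n−1}, α) > 0`, then `B(α,β) > 0`. -/
theorem positive_pairing_of_positive_intersection
    {H : Type*} [AddCommGroup H] [Module ℝ H] (n : ℕ) (hn : 1 ≤ n)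
    (T : MultilinearMap ℝ (fun _ : Fin (2 * n) => H) ℝ)
    (hsym : ∀ (v : Fin (2 * n) → H) (e : Equiv.Perm (Fin (2 * n))), T (v ∘ e) = T v)
    (B : LinearMap.BilinForm ℝ H) (hBsymm : ∀ x y, B x y = B y x)
    (c : ℝ) (hc : 0 < c)
    (hfujiki : ∀ γ : H, c * T (fun _ => γ) = B γ γ ^ n)
    (α β : H) (hβ : 0 < B β β)
    (hT : 0 < T (fun i => if (i : ℕ) < 1 then α else β)) :
    0 < B α β := by
  have h2n : 0 < 2 * n := by omega
  set z : Fin (2 * n) := ⟨0, h2n⟩ with hz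
  set T0 : ℝ := T (fun i => if (i : ℕ) < 1 then α else β) with hT0
  -- every singleton-piecewise evaluation equals T0, by symmetry
  have hsingle : ∀ i : Fin (2 * n),
      T (({i} : Finset (Fin (2 * n))).piecewise (fun _ => α) (fun _ => β)) = T0 := by
    intro i
    have hv : (({i} : Finset (Fin (2 * n))).piecewise (fun _ => α) (fun _ => β))
        = (fun j : Fin (2 * n) => if (j : ℕ) < 1 then α else β) ∘ (Equiv.swap z i) := by
      funext j
      simp only [Finset.piecewise, Finset.mem_singleton, Function.comp_apply]
      by_cases hji : j = i
      · subst hji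
        simp [Equiv.swap_apply_right, hz]
      · rw [if_neg hji]
        by_cases hjz : j = z
        · subst hjz
          rw [Equiv.swap_apply_left]
          have hiz : (i : ℕ) ≠ 0 := by
            intro h
            apply hji
            apply Fin.ext
            simp [hz, h]
          rw [if_neg (by omega)]
        · rw [Equiv.swap_apply_of_ne_of_ne hjz hji]
          have hjz' : (j : ℕ) ≠ 0 := by
            intro h
            exact hjz (by apply Fin.ext; simp [hz, h])
          rw [if_neg (by omega)]
    rw [hv, hsym]
  -- expansion of T at β + t • α
  have hexp : ∀ t : ℝ, T (fun _ => β + t • α)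
      = ∑ s : Finset (Fin (2 * n)), t ^ s.card *
          T (s.piecewise (fun _ => α) (fun _ => β)) := by
    intro t
    have h1 : (fun _ : Fin (2 * n) => β + t • α)
        = (fun _ : Fin (2 * n) => t • α) + (fun _ : Fin (2 * n) => β) := by
      funext j; simp [add_comm]
    rw [h1, T.map_add_univ]
    refine Finset.sum_congr rfl fun s _ => ?_
    have h2 : s.piecewise (fun _ : Fin (2 * n) => t • α) (fun _ : Fin (2 * n) => β)
        = s.piecewise (fun i => t • (s.piecewise (fun _ : Fin (2 * n) => α) (fun _ => β)) i)
            (s.piecewise (fun _ : Fin (2 * n) => α) (fun _ => β)) := by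
      funext j
      by_cases hj : j ∈ s <;> simp [Finset.piecewise, hj]
    rw [h2, T.map_piecewise_smul]
    simp [smul_eq_mul]
  -- the sum of derivatives at 0
  have hsum : (∑ s : Finset (Fin (2 * n)), ((s.card : ℝ) * (0:ℝ) ^ (s.card - 1)) *
      T (s.piecewise (fun _ => α) (fun _ => β))) = (2 * n : ℝ) * T0 := by
    have step : ∀ s : Finset (Fin (2 * n)), ((s.card : ℝ) * (0:ℝ) ^ (s.card - 1)) *
        T (s.piecewise (fun _ => α) (fun _ => β))
        = if s.card = 1 then T (s.piecewise (fun _ => α) (fun _ => β)) else 0 := by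
      intro s
      match h : s.card with
      | 0 => simp
      | 1 => simp
      | (k + 2) => simp [pow_succ]
    rw [Finset.sum_congr rfl fun s _ => step s, ← Finset.sum_filter]
    have hval : ∀ s ∈ Finset.univ.filter (fun s : Finset (Fin (2 * n)) => s.card = 1),
        T (s.piecewise (fun _ => α) (fun _ => β)) = T0 := by
      intro s hs
      rw [Finset.mem_filter] at hs
      obtain ⟨i, rfl⟩ := Finset.card_eq_one.mp hs.2
      exact hsingle i
    rw [Finset.sum_congr rfl hval, Finset.sum_const]
    have hcard : (Finset.univ.filter (fun s : Finset (Fin (2 * n)) => s.card = 1)).card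
        = 2 * n := by
      have : Finset.univ.filter (fun s : Finset (Fin (2 * n)) => s.card = 1)
          = (Finset.univ : Finset (Fin (2 * n))).powersetCard 1 := by
        rw [Finset.powersetCard_eq_filter, Finset.powerset_univ]
      rw [this, Finset.card_powersetCard, Finset.card_univ, Fintype.card_fin,
        Nat.choose_one_right]
    rw [hcard]
    ring
  -- derivative of the T-side at 0
  have hgd : HasDerivAt (fun t : ℝ => T (fun _ => β + t • α)) ((2 * n : ℝ) * T0) 0 := by
    have hfun : (fun t : ℝ => T (fun _ => β + t • α))
        = fun t : ℝ => ∑ s : Finset (Fin (2 * n)), t ^ s.card *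
            T (s.piecewise (fun _ => α) (fun _ => β)) := funext hexp
    rw [hfun, ← hsum]
    exact HasDerivAt.fun_sum fun s _ => (hasDerivAt_pow s.card 0).mul_const _
  -- derivative of the B-side at 0
  have hq : ∀ t : ℝ, B (β + t • α) (β + t • α)
      = B β β + (2 * B α β) * t + B α α * t ^ 2 := by
    intro t
    simp only [map_add, map_smul, LinearMap.add_apply, LinearMap.smul_apply, smul_eq_mul]
    rw [hBsymm β α]
    ring
  have hqd : HasDerivAt (fun t : ℝ => B β β + (2 * B α β) * t + B α α * t ^ 2)
      (2 * B α β) 0 := by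
    have h1 := ((hasDerivAt_id (0:ℝ)).const_mul (2 * B α β)).const_add (B β β)
    have h2 := (hasDerivAt_pow 2 (0:ℝ)).const_mul (B α α)
    simpa using h1.fun_add h2
  have hhd : HasDerivAt (fun t : ℝ => B (β + t • α) (β + t • α) ^ n)
      ((n : ℝ) * (B β β) ^ (n - 1) * (2 * B α β)) 0 := by
    have hfun : (fun t : ℝ => B (β + t • α) (β + t • α) ^ n)
        = fun t : ℝ => (B β β + (2 * B α β) * t + B α α * t ^ 2) ^ n :=
      funext fun t => by rw [hq]
    rw [hfun]
    have := hqd.fun_pow n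
    simpa using this
  -- the two functions coincide
  have hgd' : HasDerivAt (fun t : ℝ => c * T (fun _ => β + t • α))
      (c * ((2 * n : ℝ) * T0)) 0 := hgd.const_mul c
  have hfun : (fun t : ℝ => c * T (fun _ => β + t • α))
      = fun t : ℝ => B (β + t • α) (β + t • α) ^ n := funext fun t => hfujiki _
  rw [hfun] at hgd'
  have hkey : c * ((2 * n : ℝ) * T0) = (n : ℝ) * (B β β) ^ (n - 1) * (2 * B α β) :=
    hgd'.unique hhd
  have hn' : (1 : ℝ) ≤ (n : ℝ) := by exact_mod_cast hn
  have hP : (0 : ℝ) < (B β β) ^ (n - 1) := pow_pos hβ _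
  by_contra hX
  push_neg at hX
  have h2n' : (0 : ℝ) < 2 * (n : ℝ) := by linarith
  have hL : 0 < c * (2 * (n : ℝ) * T0) := mul_pos hc (mul_pos h2n' hT)
  have hR : (n : ℝ) * (B β β) ^ (n - 1) * (2 * B α β) ≤ 0 := by
    have hnP : 0 ≤ (n : ℝ) * (B β β) ^ (n - 1) := by positivity
    nlinarith
  linarith
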